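/- Let π be a cyclic permutation of {1,…,n} with n ≥ 2, and A_π the induced operator on integer segments, A_π|i₁,i₂| = |min π(i), max π(i)| over i ∈ |i₁,i₂|. Then A_π|i₁,i₂| ⊆ |i₁,i₂| if and only if |i₁,i₂| = |1,n|. -/

import Mathlib

theorem Api_subset_iff (n : ℕ) (hn : 2 ≤ n) (π : Equiv.Perm (Fin n))
    (hcyc : ∀ j : Fin n, ∃ k : ℕ, (π ^ k) ⟨0, by omega⟩ = j)
    (i₁ i₂ : Fin n) (h : i₁ < i₂) :
    (Finset.Icc ((Finset.Icc i₁ i₂).inf' (Finset.nonempty_Icc.mpr h.le) ⇑π)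
        ((Finset.Icc i₁ i₂).sup' (Finset.nonempty_Icc.mpr h.le) ⇑π) ⊆ Finset.Icc i₁ i₂) ↔
      Finset.Icc i₁ i₂ = Finset.univ := by
  constructor
  · intro hsub
    set S := Finset.Icc i₁ i₂ with hS
    -- S is invariant under π
    have hfwd : ∀ i ∈ S, π i ∈ S := by
      intro i hi
      apply hsub
      rw [Finset.mem_Icc]
      exact ⟨Finset.inf'_le _ hi, Finset.le_sup' _ hi⟩
    -- image of S under π equals S
    have himg : S.image π = S := by
      apply Finset.eq_of_subset_of_card_le
      · intro x hx
        obtain ⟨y, hy, rfl⟩ := Finset.mem_image.mp hx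
        exact hfwd y hy
      · rw [Finset.card_image_of_injective _ π.injective]
    have hbwd : ∀ i ∈ S, π⁻¹ i ∈ S := by
      intro i hi
      rw [← himg] at hi
      obtain ⟨y, hy, rfl⟩ := Finset.mem_image.mp hi
      simpa using hy
    have hfwdk : ∀ k : ℕ, ∀ i ∈ S, (π ^ k) i ∈ S := by
      intro k
      induction k with
      | zero => simp
      | succ m ih =>
        intro i hi
        rw [pow_succ]
        exact ih _ (hfwd i hi)
    have hbwdk : ∀ k : ℕ, ∀ i ∈ S, ((π ^ k)⁻¹) i ∈ S := by
      intro k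
      induction k with
      | zero => simp
      | succ m ih =>
        intro i hi
        have : (π ^ (m + 1))⁻¹ i = (π ^ m)⁻¹ (π⁻¹ i) := by
          rw [pow_succ']
          simp [Equiv.Perm.mul_apply]
        rw [this]
        exact ih _ (hbwd i hi)
    apply Finset.eq_univ_of_forall
    intro j
    obtain ⟨k, hk⟩ := hcyc j
    obtain ⟨k₀, hk₀⟩ := hcyc i₁
    have hi₁S : i₁ ∈ S := Finset.mem_Icc.mpr ⟨le_refl _, h.le⟩
    have h0 : (⟨0, by omega⟩ : Fin n) ∈ S := by
      have := hbwdk k₀ i₁ hi₁S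
      rwa [← hk₀, ← Equiv.Perm.mul_apply, inv_mul_cancel, Equiv.Perm.one_apply] at this
    rw [← hk]
    exact hfwdk k _ h0
  · intro heq
    intro x hx
    rw [heq]
    exact Finset.mem_univ x
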